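/- Let L ⊆ ℝ^n be a polytope in standard form and let x, y ∈ L. Then supp(y) ⊆ supp(x) if and only if there exist a real number α with 0 < α ≤ 1 and a point z ∈ L such that x = α·y + (1−α)·z. -/

import Mathlib

/-- The support of a vector: the set of indices with nonzero coordinate. -/
def supp {n : ℕ} (x : Fin n → ℝ) : Set (Fin n) := {i | x i ≠ 0}

/-- A polytope in standard form: a bounded intersection of an affine subspace
(given by linear equations `A x = b`) with the nonnegative orthant. -/
def StdForm {n : ℕ} (L : Set (Fin n → ℝ)) : Prop :=
  Bornology.IsBounded L ∧
    ∃ (k : ℕ) (A : Matrix (Fin k) (Fin n) ℝ) (b : Fin k → ℝ),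
      L = {x | A.mulVec x = b ∧ ∀ i, 0 ≤ x i}

theorem stmt_2 {n : ℕ} (L : Set (Fin n → ℝ)) (hL : StdForm L)
    (x y : Fin n → ℝ) (hx : x ∈ L) (hy : y ∈ L) :
    supp y ⊆ supp x ↔
      ∃ α : ℝ, 0 < α ∧ α ≤ 1 ∧ ∃ z ∈ L, x = α • y + (1 - α) • z := by
  obtain ⟨-, k, A, b, rfl⟩ := hL
  obtain ⟨hxA, hxpos⟩ := hx
  obtain ⟨hyA, hypos⟩ := hy
  constructor
  · intro hsub
    set f : Fin n → ℝ := fun i => if y i = 0 then 1/2 else min (1/2) (x i / y i) with hf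
    set s : Finset ℝ := insert (1/2) (Finset.image f Finset.univ) with hs
    have hsne : s.Nonempty := ⟨1/2, by simp [hs]⟩
    set α := s.min' hsne with hα
    have hαle : α ≤ 1/2 := Finset.min'_le _ _ (by simp [hs])
    have hαf : ∀ i, α ≤ f i := fun i =>
      Finset.min'_le _ _ (by simp [hs])
    have hαpos : 0 < α := by
      rw [hα, Finset.lt_min'_iff]
      intro c hc
      simp [hs] at hc
      rcases hc with rfl | ⟨i, rfl⟩
      · norm_num
      · by_cases hyi : y i = 0
        · simp [hf, hyi]
        · have hyipos : 0 < y i := (hypos i).lt_of_ne (Ne.symm hyi)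
          have hxipos : 0 < x i := (hxpos i).lt_of_ne (Ne.symm (hsub hyi))
          have : 0 < x i / y i := div_pos hxipos hyipos
          simp only [hf, hyi, if_false, lt_min_iff]
          constructor <;> [norm_num; exact this]
    have h1α : (0:ℝ) < 1 - α := by linarith
    have hxy : ∀ i, α * y i ≤ x i := by
      intro i
      by_cases hyi : y i = 0
      · simpa [hyi] using hxpos i
      · have hyipos : 0 < y i := (hypos i).lt_of_ne (Ne.symm hyi)
        have h := hαf i
        rw [hf] at h
        simp only [hyi, if_false, le_min_iff] at h
        have h2 : α ≤ x i / y i := h.2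
        calc α * y i ≤ (x i / y i) * y i := by nlinarith
          _ = x i := div_mul_cancel₀ _ (ne_of_gt hyipos)
    refine ⟨α, hαpos, by linarith, (1-α)⁻¹ • (x - α • y), ⟨?_, ?_⟩, ?_⟩
    · have : A.mulVec ((1-α)⁻¹ • (x - α • y))
          = (1-α)⁻¹ • (A.mulVec x - α • A.mulVec y) := by
        simp [Matrix.mulVec_smul, Matrix.mulVec_sub]
      rw [this, hxA, hyA]
      funext j
      simp only [Pi.smul_apply, Pi.sub_apply, smul_eq_mul]
      field_simp
    · intro i
      simp only [Pi.smul_apply, Pi.sub_apply, smul_eq_mul]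
      exact mul_nonneg (inv_nonneg.mpr h1α.le) (by linarith [hxy i])
    · funext i
      simp only [Pi.add_apply, Pi.smul_apply, Pi.sub_apply, smul_eq_mul]
      field_simp
      ring
  · rintro ⟨α, hα0, hα1, z, ⟨hzA, hzpos⟩, hxeq⟩
    intro i hi
    have hyi : 0 < y i := (hypos i).lt_of_ne (Ne.symm hi)
    have : 0 < x i := by
      rw [hxeq]
      simp only [Pi.add_apply, Pi.smul_apply, smul_eq_mul]
      have := hzpos i
      nlinarith
    exact ne_of_gt this
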